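/- arXiv:2403.10060 — 4 statements merged into one kernel-verified Lean document; each statement's English description precedes it below -/
import Mathlib

section
/- Let C := (sup_{y ∈ ℝ²} ‖X(y)‖)/(inf_{y ∈ ℝ²} ‖X(y)‖), which is finite and at least 1 since X is continuous, ℤ²-periodic and nowhere vanishing. Then for every x ∈ ℝ² and every n ∈ ℕ, C⁻¹ · λⁿ · ‖X(x)‖ ≤ ‖D(Fⁿ)(x)(X(x))‖ ≤ C · λⁿ · ‖X(x)‖, where D(Fⁿ)(x) denotes the Fréchet derivative of the n-th iterate of F at x. -/
noncomputable section

abbrev E2 : Type := EuclideanSpace ℝ (Fin 2)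

/-- Embedding of an integer vector into `ℝ²`. -/
def intVec (m : Fin 2 → ℤ) : E2 :=
  (WithLp.equiv 2 (Fin 2 → ℝ)).symm fun i => (m i : ℝ)

/-- Action of an integer matrix on `ℝ²`. -/
def matAct (A : Matrix (Fin 2) (Fin 2) ℤ) (x : E2) : E2 :=
  (WithLp.equiv 2 (Fin 2 → ℝ)).symm
    ((A.map (Int.cast : ℤ → ℝ)).mulVec ((WithLp.equiv 2 (Fin 2 → ℝ)) x))

/-- A `2×2` integer matrix is hyperbolic if none of its complex eigenvalues has modulus `1`. -/
def IsHyperbolicZ (A : Matrix (Fin 2) (Fin 2) ℤ) : Prop :=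
  ∀ μ : ℂ, (A.map (Int.cast : ℤ → ℂ)).charpoly.IsRoot μ → ‖μ‖ ≠ 1


/-- uniform bounds for the derivative of iterates along the flow direction. -/
theorem stmt_3
    (lam : ℝ) (hlam : 1 < lam)
    (Φ : ℝ → E2 → E2)
    (hflow0 : Φ 0 = id)
    (hflow : ∀ s t : ℝ, Φ (s + t) = Φ s ∘ Φ t)
    (hΦsmooth : ContDiff ℝ 2 fun p : ℝ × E2 => Φ p.1 p.2)
    (hΦper : ∀ (t : ℝ) (x : E2) (m : Fin 2 → ℤ), Φ t (x + intVec m) = Φ t x + intVec m)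
    (X : E2 → E2)
    (hX : ∀ x : E2, HasDerivAt (fun t => Φ t x) (X x) 0)
    (hXne : ∀ x : E2, X x ≠ 0)
    (hXcont : Continuous X)
    (hXper : ∀ (x : E2) (m : Fin 2 → ℤ), X (x + intVec m) = X x)
    (A : Matrix (Fin 2) (Fin 2) ℤ)
    (hdet : A.det = 1 ∨ A.det = -1)
    (F Finv : E2 → E2)
    (hF : ContDiff ℝ 2 F) (hFinv : ContDiff ℝ 2 Finv)
    (hFinvF : Finv ∘ F = id) (hFFinv : F ∘ Finv = id)
    (hFlift : ∀ (x : E2) (m : Fin 2 → ℤ), F (x + intVec m) = F x + intVec (A.mulVec m))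
    (hcomm : ∀ t : ℝ, F ∘ Φ t = Φ (lam * t) ∘ F) :
    1 ≤ (⨆ y : E2, ‖X y‖) / (⨅ y : E2, ‖X y‖) ∧
    ∀ (x : E2) (n : ℕ),
      ((⨆ y : E2, ‖X y‖) / (⨅ y : E2, ‖X y‖))⁻¹ * lam ^ n * ‖X x‖ ≤
          ‖fderiv ℝ (F^[n]) x (X x)‖ ∧
        ‖fderiv ℝ (F^[n]) x (X x)‖ ≤
          ((⨆ y : E2, ‖X y‖) / (⨅ y : E2, ‖X y‖)) * lam ^ n * ‖X x‖ := by
  classical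
  set S := ⨆ y : E2, ‖X y‖ with hS
  set I := ⨅ y : E2, ‖X y‖ with hI
  have hcont : Continuous fun y : E2 => ‖X y‖ := hXcont.norm
  set K : Set E2 := (WithLp.equiv 2 (Fin 2 → ℝ)).symm '' Set.Icc 0 1 with hK
  have hKcomp : IsCompact K :=
    (isCompact_Icc).image (PiLp.continuous_toLp 2 fun _ : Fin 2 => ℝ)
  have hKne : K.Nonempty := (Set.nonempty_Icc.2 zero_le_one).image _
  have hred : ∀ x : E2, ∃ y ∈ K, ‖X y‖ = ‖X x‖ := by
    intro x
    refine ⟨x + intVec (fun i => -⌊x i⌋), ?_, by rw [hXper]⟩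
    rw [hK]
    refine ⟨fun i => Int.fract (x i), ?_, ?_⟩
    · simp only [Set.mem_Icc, Pi.le_def]
      exact ⟨fun i => by simpa using Int.fract_nonneg (x i),
        fun i => by simpa using (Int.fract_lt_one (x i)).le⟩
    · ext i
      simp [intVec, ← Int.self_sub_floor]
      ring
  obtain ⟨y0, hy0K, hy0min⟩ := hKcomp.exists_isMinOn hKne hcont.continuousOn
  have hy0pos : (0:ℝ) < ‖X y0‖ := norm_pos_iff.mpr (hXne y0)
  have hbddA : BddAbove (Set.range fun y : E2 => ‖X y‖) := by
    obtain ⟨B, hB⟩ := (hKcomp.image hcont).bddAbove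
    refine ⟨B, ?_⟩
    rintro r ⟨x, rfl⟩
    obtain ⟨y, hyK, hyx⟩ := hred x
    exact le_of_eq_of_le hyx.symm (hB ⟨y, hyK, rfl⟩)
  have hbddB : BddBelow (Set.range fun y : E2 => ‖X y‖) :=
    ⟨0, by rintro r ⟨x, rfl⟩; exact norm_nonneg _⟩
  have hIle : ∀ x : E2, I ≤ ‖X x‖ := fun x => ciInf_le hbddB x
  have hleS : ∀ x : E2, ‖X x‖ ≤ S := fun x => le_ciSup hbddA x
  have hIpos : (0:ℝ) < I := by
    have h1 : ‖X y0‖ ≤ I := le_ciInf fun x => by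
      obtain ⟨y, hyK, hyx⟩ := hred x
      calc ‖X y0‖ ≤ ‖X y‖ := isMinOn_iff.mp hy0min y hyK
        _ = ‖X x‖ := hyx
    exact lt_of_lt_of_le hy0pos h1
  have hSpos : (0:ℝ) < S := lt_of_lt_of_le hIpos (le_trans (hIle y0) (hleS y0))
  have hSne : S ≠ 0 := hSpos.ne'
  have hIne : I ≠ 0 := hIpos.ne'
  have hC1 : 1 ≤ S / I := (one_le_div hIpos).mpr (le_trans (hIle y0) (hleS y0))
  have hFd : Differentiable ℝ F := hF.differentiable two_ne_zero
  have hstep : ∀ x : E2, fderiv ℝ F x (X x) = lam • X (F x) := by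
    intro x
    have hx0 : Φ 0 x = x := by rw [hflow0]; rfl
    have hder : HasDerivAt (fun t => Φ t x) (X x) 0 := hX x
    have hF' : HasFDerivAt F (fderiv ℝ F x) (Φ 0 x) := by
      rw [hx0]; exact (hFd x).hasFDerivAt
    have h1 : HasDerivAt (fun t => F (Φ t x)) (fderiv ℝ F x (X x)) 0 :=
      hF'.comp_hasDerivAt 0 hder
    have hmul : HasDerivAt (fun t : ℝ => lam * t) lam 0 := by
      simpa using (hasDerivAt_id (0:ℝ)).const_mul lam
    have hΦF : HasDerivAt (fun s => Φ s (F x)) (X (F x)) (lam * 0) := by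
      simpa using hX (F x)
    have h2 : HasDerivAt (fun t => Φ (lam * t) (F x)) (lam • X (F x)) 0 := by
      exact hΦF.scomp 0 hmul
    have heq : (fun t => F (Φ t x)) = fun t => Φ (lam * t) (F x) := by
      funext t; exact congrFun (hcomm t) x
    rw [heq] at h1
    exact h1.unique h2
  have hFnd : ∀ n : ℕ, Differentiable ℝ (F^[n]) := by
    intro n; induction n with
    | zero => simpa using differentiable_id
    | succ n ih => rw [Function.iterate_succ']; exact hFd.comp ih
  have hmain : ∀ (x : E2) (n : ℕ),
      fderiv ℝ (F^[n]) x (X x) = (lam ^ n) • X (F^[n] x) := by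
    intro x n
    induction n with
    | zero => simp
    | succ n ih =>
      rw [Function.iterate_succ', fderiv_comp x (hFd _) ((hFnd n) x)]
      simp only [ContinuousLinearMap.coe_comp', Function.comp_apply]
      rw [ih, map_smul, hstep, smul_smul, ← pow_succ]
  refine ⟨hC1, fun x n => ?_⟩
  have hlampos : (0:ℝ) < lam ^ n := pow_pos (lt_trans one_pos hlam) n
  have hnorm : ‖fderiv ℝ (F^[n]) x (X x)‖ = lam ^ n * ‖X (F^[n] x)‖ := by
    rw [hmain, norm_smul, Real.norm_eq_abs, abs_of_pos hlampos]
  constructor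
  · rw [hnorm, inv_div]
    calc I / S * lam ^ n * ‖X x‖ ≤ I / S * lam ^ n * S := by
          apply mul_le_mul_of_nonneg_left (hleS x)
          positivity
      _ = lam ^ n * I := by field_simp
      _ ≤ lam ^ n * ‖X (F^[n] x)‖ := mul_le_mul_of_nonneg_left (hIle _) hlampos.le
  · rw [hnorm]
    calc lam ^ n * ‖X (F^[n] x)‖ ≤ lam ^ n * S :=
          mul_le_mul_of_nonneg_left (hleS _) hlampos.le
      _ = S / I * lam ^ n * I := by field_simp
      _ ≤ S / I * lam ^ n * ‖X x‖ := by
          apply mul_le_mul_of_nonneg_left (hIle x)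
          positivity
end
end

section
/- There exist no x ∈ ℝ², T > 0 and m ∈ ℤ² with Φ T x = x + m. (Equivalently, the orbit foliation on the torus T² = ℝ²/ℤ² of the flow induced by Φ has no closed leaves: the induced flow on T² has no periodic orbits.) -/
noncomputable section

set_option maxHeartbeats 1000000

lemma intVec_neg (m : Fin 2 → ℤ) : intVec (-m) = - intVec m := by
  ext i; simp [intVec]

/-- the induced flow on the torus has no periodic orbits. -/
theorem stmt_5
    (lam : ℝ) (hlam : 1 < lam)
    (Φ : ℝ → E2 → E2)
    (hflow0 : Φ 0 = id)
    (hflow : ∀ s t : ℝ, Φ (s + t) = Φ s ∘ Φ t)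
    (hΦsmooth : ContDiff ℝ 2 fun p : ℝ × E2 => Φ p.1 p.2)
    (hΦper : ∀ (t : ℝ) (x : E2) (m : Fin 2 → ℤ), Φ t (x + intVec m) = Φ t x + intVec m)
    (X : E2 → E2)
    (hX : ∀ x : E2, HasDerivAt (fun t => Φ t x) (X x) 0)
    (hXne : ∀ x : E2, X x ≠ 0)
    (hXcont : Continuous X)
    (hXper : ∀ (x : E2) (m : Fin 2 → ℤ), X (x + intVec m) = X x)
    (A : Matrix (Fin 2) (Fin 2) ℤ)
    (hdet : A.det = 1 ∨ A.det = -1)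
    (F Finv : E2 → E2)
    (hF : ContDiff ℝ 2 F) (hFinv : ContDiff ℝ 2 Finv)
    (hFinvF : Finv ∘ F = id) (hFFinv : F ∘ Finv = id)
    (hFlift : ∀ (x : E2) (m : Fin 2 → ℤ), F (x + intVec m) = F x + intVec (A.mulVec m))
    (hcomm : ∀ t : ℝ, F ∘ Φ t = Φ (lam * t) ∘ F) :
    ¬ ∃ (x : E2) (T : ℝ) (m : Fin 2 → ℤ), 0 < T ∧ Φ T x = x + intVec m := by
  rintro ⟨x, T, m, hT, hper⟩
  have hlam0 : (0:ℝ) < lam := lt_trans one_pos hlam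
  -- the integer inverse of A
  set B : Matrix (Fin 2) (Fin 2) ℤ := A.det • A.adjugate with hB
  have hAB : ∀ v : Fin 2 → ℤ, A.mulVec (B.mulVec v) = v := by
    intro v
    rw [Matrix.mulVec_mulVec]
    have h1 : A * B = 1 := by
      rw [hB, Matrix.mul_smul, Matrix.mul_adjugate, smul_smul]
      rcases hdet with h | h <;> simp [h]
    rw [h1, Matrix.one_mulVec]
  have hFval : ∀ w, F (Finv w) = w := fun w => congrFun hFFinv w
  have hFval' : ∀ w, Finv (F w) = w := fun w => congrFun hFinvF w
  have hFinj : Function.Injective F := Function.LeftInverse.injective hFval'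
  have hFinvlift : ∀ (z : E2) (k : Fin 2 → ℤ),
      Finv (z + intVec k) = Finv z + intVec (B.mulVec k) := by
    intro z k
    apply hFinj
    rw [hFlift, hAB, hFval, hFval]
  have hFinvcomm : ∀ (t : ℝ) (z : E2), Finv (Φ (lam * t) z) = Φ t (Finv z) := by
    intro t z
    have h := congrFun (hcomm t) (Finv z)
    simp only [Function.comp_apply] at h
    calc Finv (Φ (lam * t) z) = Finv (Φ (lam * t) (F (Finv z))) := by rw [hFval]
    _ = Finv (F (Φ t (Finv z))) := by rw [← h]
    _ = Φ t (Finv z) := hFval' _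
  -- iterated periodic points with shrinking period
  have hiter : ∀ n : ℕ, ∃ mn : Fin 2 → ℤ,
      Φ (T / lam ^ n) (Finv^[n] x) = Finv^[n] x + intVec mn := by
    intro n; induction n with
    | zero => exact ⟨m, by simpa using hper⟩
    | succ n ih =>
      obtain ⟨mn, h⟩ := ih
      refine ⟨B.mulVec mn, ?_⟩
      have hs : lam * (T / lam ^ (n+1)) = T / lam ^ n := by
        field_simp; ring
      rw [Function.iterate_succ_apply']
      calc Φ (T / lam ^ (n+1)) (Finv (Finv^[n] x))
          = Finv (Φ (lam * (T / lam ^ (n+1))) (Finv^[n] x)) := (hFinvcomm _ _).symm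
        _ = Finv (Φ (T / lam ^ n) (Finv^[n] x)) := by rw [hs]
        _ = Finv (Finv^[n] x + intVec mn) := by rw [h]
        _ = Finv (Finv^[n] x) + intVec (B.mulVec mn) := hFinvlift _ _
  choose mseq hmseq using hiter
  set s : ℕ → ℝ := fun n => T / lam ^ n with hs_def
  have hspos : ∀ n, 0 < s n := fun n => div_pos hT (pow_pos hlam0 n)
  have hstend : Filter.Tendsto s Filter.atTop (nhds 0) := by
    have h1 : Filter.Tendsto (fun n : ℕ => lam⁻¹ ^ n) Filter.atTop (nhds 0) :=
      tendsto_pow_atTop_nhds_zero_of_lt_one (by positivity) (inv_lt_one_of_one_lt₀ hlam)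
    have h2 := h1.const_mul T
    simpa [hs_def, div_eq_mul_inv, inv_pow, mul_zero] using h2
  -- reduce the points mod ℤ²
  set y : ℕ → E2 := fun n => Finv^[n] x with hy
  set y' : ℕ → E2 := fun n => y n - intVec (fun i => ⌊y n i⌋) with hy'
  have hper' : ∀ n, Φ (s n) (y' n) = y' n + intVec (mseq n) := by
    intro n
    have h2 := hΦper (T / lam ^ n) (y' n) (fun i => ⌊y n i⌋)
    have h1 : y' n + intVec (fun i => ⌊y n i⌋) = y n := by
      simp only [hy']; abel
    rw [h1] at h2
    have h4 : Φ (T / lam ^ n) (y n) = y n + intVec (mseq n) := hmseq n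
    rw [h4] at h2
    have h5 : Φ (T / lam ^ n) (y' n) = y n + intVec (mseq n) - intVec (fun i => ⌊y n i⌋) := by
      rw [h2]; abel
    rw [show Φ (s n) (y' n) = Φ (T / lam ^ n) (y' n) from rfl, h5]
    simp only [hy']
    abel
  have hy'mem : ∀ n (i : Fin 2), y' n i ∈ Set.Icc (0:ℝ) 1 := by
    intro n i
    have h0 : y' n i = y n i - (⌊y n i⌋ : ℝ) := rfl
    rw [h0]
    constructor
    · linarith [Int.floor_le (y n i)]
    · linarith [Int.lt_floor_add_one (y n i)]
  have hbnd : ∀ n, y' n ∈ Metric.closedBall (0:E2) 2 := by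
    intro n
    rw [Metric.mem_closedBall, dist_zero_right, EuclideanSpace.norm_eq]
    have hsum : (∑ i, ‖y' n i‖ ^ 2) ≤ 4 := by
      have hb : ∀ i : Fin 2, ‖y' n i‖ ^ 2 ≤ 1 := by
        intro i
        obtain ⟨h1, h2⟩ := hy'mem n i
        rw [Real.norm_eq_abs, sq_abs]
        nlinarith
      calc (∑ i, ‖y' n i‖ ^ 2) ≤ ∑ _i : Fin 2, (1:ℝ) :=
            Finset.sum_le_sum fun i _ => hb i
        _ ≤ 4 := by simp; norm_num
    calc Real.sqrt (∑ i, ‖y' n i‖ ^ 2) ≤ Real.sqrt 4 := Real.sqrt_le_sqrt hsum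
      _ = 2 := by rw [show (4:ℝ) = 2^2 by norm_num, Real.sqrt_sq (by norm_num : (0:ℝ) ≤ 2)]
  obtain ⟨z0, -, φ, hφmono, hφtend⟩ :=
    tendsto_subseq_of_bounded Metric.isBounded_closedBall hbnd
  -- derivative of the flow at any time
  have hX' : ∀ (z : E2) (t : ℝ), HasDerivAt (fun u => Φ u z) (X (Φ t z)) t := by
    intro z t
    set G : ℝ → E2 := fun h => Φ h (Φ t z) with hG
    have h0' : HasDerivAt G (X (Φ t z)) 0 := hX (Φ t z)
    have hid : HasDerivAt (fun u : ℝ => u - t) 1 t := (hasDerivAt_id t).sub_const t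
    have h1 : HasDerivAt (G ∘ fun u : ℝ => u - t) ((1:ℝ) • X (Φ t z)) t :=
      h0'.scomp_of_eq t hid (sub_self t).symm
    have hEq : (fun u : ℝ => G (u - t)) = fun u => Φ u z := by
      funext u
      have := hflow (u - t) t
      rw [sub_add_cancel] at this
      exact (congrFun this z).symm
    simp only [Function.comp_def] at h1
    rw [hEq] at h1
    simpa using h1
  have hΦc : Continuous fun p : ℝ × E2 => Φ p.1 p.2 := hΦsmooth.continuous
  -- coordinate of displacement as an integral
  have hcoord : ∀ (z : E2) (sv : ℝ) (i : Fin 2),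
      Φ sv z i - z i = ∫ u in (0:ℝ)..sv, X (Φ u z) i := by
    intro z sv i
    have hc : Continuous fun u : ℝ => X (Φ u z) i :=
      (EuclideanSpace.proj i).continuous.comp
        (hXcont.comp (hΦc.comp (continuous_id.prodMk continuous_const)))
    have hderiv : ∀ u ∈ Set.uIcc (0:ℝ) sv,
        HasDerivAt (fun t => Φ t z i) (X (Φ u z) i) u := by
      intro u _
      have h := (EuclideanSpace.proj i).hasFDerivAt.comp_hasDerivAt u (hX' z u)
      exact h
    have h := intervalIntegral.integral_eq_sub_of_hasDerivAt hderiv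
      (hc.intervalIntegrable 0 sv)
    rw [h, hflow0]
    simp
  -- pick a coordinate where X z0 doesn't vanish
  obtain ⟨i, hi⟩ : ∃ i, X z0 i ≠ 0 := by
    by_contra h; push_neg at h
    exact hXne z0 (by ext i; exact h i)
  set c : ℝ := X z0 i with hc_def
  -- continuity of the coordinate vector field along the flow, at (0, z0)
  have hg : Continuous fun p : ℝ × E2 => X (Φ p.1 p.2) i :=
    (EuclideanSpace.proj i).continuous.comp (hXcont.comp hΦc)
  have hcontat := hg.continuousAt (x := ((0:ℝ), z0))
  rw [Metric.continuousAt_iff] at hcontat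
  obtain ⟨δ, hδpos, hδ⟩ := hcontat (|c|/2) (by positivity)
  have hg0 : X (Φ 0 z0) i = c := by rw [hflow0]; rfl
  -- choose a far-enough point in the subsequence
  set ε : ℝ := min δ (1/(2*|c|+1)) with hε
  have hεpos : 0 < ε := lt_min hδpos (by positivity)
  have hev1 : ∀ᶠ k in Filter.atTop, s (φ k) < ε := by
    have ht : Filter.Tendsto (fun k => s (φ k)) Filter.atTop (nhds 0) :=
      hstend.comp hφmono.tendsto_atTop
    exact ht.eventually_lt_const hεpos
  have hev2 : ∀ᶠ k in Filter.atTop, dist (y' (φ k)) z0 < δ := by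
    rw [Metric.tendsto_atTop] at hφtend
    obtain ⟨N, hN⟩ := hφtend δ hδpos
    exact Filter.eventually_atTop.2 ⟨N, fun k hk => hN k hk⟩
  obtain ⟨k, hk1, hk2⟩ := (hev1.and hev2).exists
  set n := φ k
  set sn : ℝ := s n with hsn
  set z : E2 := y' n with hz
  have hsnpos : 0 < sn := hspos n
  have hsnδ : sn < δ := lt_of_lt_of_le hk1 (min_le_left _ _)
  have hsnc : sn < 1/(2*|c|+1) := lt_of_lt_of_le hk1 (min_le_right _ _)
  -- the period relation in coordinate i
  have hval : ((mseq n i : ℝ)) = ∫ u in (0:ℝ)..sn, X (Φ u z) i := by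
    have h := hcoord z sn i
    rw [hper' n] at h
    rw [← h]
    show ((mseq n i : ℝ)) = (z + intVec (mseq n)) i - z i
    have : (z + intVec (mseq n)) i = z i + (mseq n i : ℝ) := rfl
    rw [this]; ring
  -- pointwise estimate on the integrand
  have hest : ∀ u ∈ Set.uIoc (0:ℝ) sn, ‖X (Φ u z) i - c‖ ≤ |c|/2 := by
    intro u hu
    rw [Set.uIoc_of_le hsnpos.le] at hu
    obtain ⟨hu1, hu2⟩ := hu
    have hdist : dist ((u, z) : ℝ × E2) ((0:ℝ), z0) < δ := by
      rw [Prod.dist_eq]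
      apply max_lt
      · rw [Real.dist_eq, sub_zero, abs_of_pos hu1]
        exact lt_of_le_of_lt hu2 hsnδ
      · exact hk2
    have := hδ hdist
    rw [hg0] at this
    exact le_of_lt (by simpa [Real.norm_eq_abs, Real.dist_eq] using this)
  -- integral estimates
  have hint_split : ∫ u in (0:ℝ)..sn, X (Φ u z) i
      = (∫ u in (0:ℝ)..sn, (X (Φ u z) i - c)) + sn * c := by
    have hc1 : Continuous fun u : ℝ => X (Φ u z) i :=
      (EuclideanSpace.proj i).continuous.comp
        (hXcont.comp (hΦc.comp (continuous_id.prodMk continuous_const)))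
    rw [intervalIntegral.integral_sub (hc1.intervalIntegrable 0 sn)
      (intervalIntegrable_const)]
    rw [intervalIntegral.integral_const]
    simp [smul_eq_mul]
  have herr : ‖∫ u in (0:ℝ)..sn, (X (Φ u z) i - c)‖ ≤ (|c|/2) * |sn - 0| :=
    intervalIntegral.norm_integral_le_of_norm_le_const hest
  rw [sub_zero, abs_of_pos hsnpos] at herr
  rw [Real.norm_eq_abs] at herr
  -- conclude: the integer mseq n i satisfies 0 < |...| < 1
  have habs : |(mseq n i : ℝ) - sn * c| ≤ |c|/2 * sn := by
    rw [hval, hint_split]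
    simpa using herr
  have hclb : 0 < |c| := abs_pos.mpr hi
  have hlow : 0 < |(mseq n i : ℝ)| := by
    have h1 : sn * |c| - |c|/2 * sn ≤ |(mseq n i : ℝ)| := by
      have h2 : |sn * c| - |(mseq n i : ℝ) - sn * c| ≤ |(mseq n i : ℝ)| := by
        have := abs_sub_abs_le_abs_sub (sn * c) ((mseq n i : ℝ))
        have h3 : |sn * c - (mseq n i : ℝ)| = |(mseq n i : ℝ) - sn * c| := abs_sub_comm _ _
        linarith [abs_sub_abs_le_abs_sub (sn*c) ((mseq n i : ℝ)), abs_sub_comm (sn*c) ((mseq n i:ℝ))]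
      have h4 : |sn * c| = sn * |c| := by
        rw [abs_mul, abs_of_pos hsnpos]
      linarith
    nlinarith
  have hhigh : |(mseq n i : ℝ)| < 1 := by
    have h1 : |(mseq n i : ℝ)| ≤ |sn * c| + |c|/2 * sn := by
      have := abs_sub_le ((mseq n i : ℝ)) (sn * c) 0
      simp only [sub_zero] at this
      calc |(mseq n i : ℝ)| ≤ |(mseq n i : ℝ) - sn * c| + |sn * c| := by
            simpa using abs_sub_le ((mseq n i : ℝ)) (sn * c) 0
        _ ≤ |c|/2 * sn + |sn * c| := by linarith
        _ = |sn * c| + |c|/2 * sn := by ring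
    have h4 : |sn * c| = sn * |c| := by rw [abs_mul, abs_of_pos hsnpos]
    rw [h4] at h1
    have h5 : sn * (2*|c|+1) < 1 := by
      rw [lt_div_iff₀ (by positivity)] at hsnc
      linarith
    nlinarith
  have hne0 : mseq n i ≠ 0 := by
    intro h
    rw [h] at hlow
    simp at hlow
  have : (1:ℝ) ≤ |(mseq n i : ℝ)| := by
    rw [← Int.cast_abs]
    exact_mod_cast Int.one_le_abs hne0
  linarith
end
end

section
/- For every t ∈ ℝ, ‖Z(Ψ t 0)‖ = ‖Z(0)‖: the speed of the flow Ψ is constant along the orbit of the fixed point 0 of A. -/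
noncomputable section

/-- the speed of the flow `Ψ` is constant along the orbit of `0`. -/
theorem stmt_15 (lam : ℝ) (hlam : 1 < lam)
    (A : E2 →L[ℝ] E2) (v : E2) (hv : A v = lam • v)
    (Ψ : ℝ → E2 → E2)
    (hflow0 : Ψ 0 = id)
    (hflow : ∀ s t : ℝ, Ψ (s + t) = Ψ s ∘ Ψ t)
    (hcont : Continuous fun p : ℝ × E2 => Ψ p.1 p.2)
    (Z : E2 → E2)
    (hZ : ∀ x : E2, HasDerivAt (fun t => Ψ t x) (Z x) 0)
    (hZcont : Continuous Z)
    (hZv : ∀ x : E2, ∃ c : ℝ, Z x = c • v)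
    (hcomm : ∀ (t : ℝ) (x : E2), A (Ψ t x) = Ψ (lam * t) (A x)) :
    ∀ t : ℝ, ‖Z (Ψ t 0)‖ = ‖Z 0‖ := by
  have hlam0 : lam ≠ 0 := by positivity
  -- derivative of the flow at a general time
  have hderiv : ∀ (x : E2) (t : ℝ), HasDerivAt (fun s => Ψ s x) (Z (Ψ t x)) t := by
    intro x t
    have hh : HasDerivAt (fun s : ℝ => s - t) 1 t := (hasDerivAt_id t).sub_const t
    have hg : HasDerivAt (fun s => Ψ s (Ψ t x)) (Z (Ψ t x)) (t - t) := by
      rw [sub_self]; exact hZ (Ψ t x)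
    have := HasDerivAt.scomp (h := fun s : ℝ => s - t) t hg hh
    have hfun : ((fun s => Ψ s (Ψ t x)) ∘ fun s : ℝ => s - t) = fun s => Ψ s x := by
      funext s
      have := hflow (s - t) t
      simp only [Function.comp_apply]
      calc Ψ (s - t) (Ψ t x) = Ψ (s - t + t) x := by rw [hflow]; rfl
        _ = Ψ s x := by ring_nf
    rw [hfun] at this
    simpa using this
  -- w t := Z (Ψ t 0)
  set w : ℝ → E2 := fun t => Z (Ψ t 0) with hw
  -- A maps anything parallel to v as multiplication by lam
  have hAZ : ∀ x : E2, A (Z x) = lam • Z x := by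
    intro x
    obtain ⟨c, hc⟩ := hZv x
    rw [hc, map_smul, hv, smul_comm]
  -- commutation at the level of derivatives: A (w t) = lam • w (lam * t)
  have hkey : ∀ t : ℝ, w (lam * t) = w t := by
    intro t
    have h1 : HasDerivAt (fun s => A (Ψ s 0)) (A (w t)) t :=
      A.hasFDerivAt.comp_hasDerivAt t (hderiv 0 t)
    have hfun : (fun s => A (Ψ s 0)) = fun s => Ψ (lam * s) 0 := by
      funext s; rw [hcomm, map_zero]
    have h2 : HasDerivAt (fun s => Ψ (lam * s) 0) (lam • w (lam * t)) t := by
      have hh : HasDerivAt (fun s : ℝ => lam * s) lam t := by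
        simpa using (hasDerivAt_id t).const_mul lam
      have hg : HasDerivAt (fun s => Ψ s 0) (Z (Ψ (lam * t) 0)) ((fun s : ℝ => lam * s) t) :=
        hderiv 0 (lam * t)
      exact hg.scomp t hh
    rw [hfun] at h1
    have heq : A (w t) = lam • w (lam * t) := h1.unique h2
    have heq2 : lam • w t = lam • w (lam * t) := by
      rw [← heq]; exact (hAZ (Ψ t 0)).symm
    exact (smul_right_injective E2 hlam0 heq2).symm
  -- continuity of w
  have hwc : Continuous w := hZcont.comp (hcont.comp (continuous_id.prodMk continuous_const))
  intro t
  -- w (t / lam ^ n) = w t for all n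
  have hiter : ∀ n : ℕ, w (t / lam ^ n) = w t := by
    intro n
    induction n with
    | zero => simp
    | succ n ih =>
      have : lam * (t / lam ^ (n + 1)) = t / lam ^ n := by
        field_simp; ring
      rw [← ih, ← this, hkey]
  have htend : Filter.Tendsto (fun n : ℕ => t / lam ^ n) Filter.atTop (nhds 0) := by
    have h1 : Filter.Tendsto (fun n : ℕ => (lam⁻¹) ^ n) Filter.atTop (nhds 0) := by
      apply tendsto_pow_atTop_nhds_zero_of_lt_one
      · positivity
      · rw [inv_lt_one_iff₀]; right; exact hlam
    have := h1.const_mul t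
    simpa [div_eq_mul_inv, inv_pow] using this
  have : Filter.Tendsto (fun n : ℕ => w (t / lam ^ n)) Filter.atTop (nhds (w 0)) :=
    (hwc.tendsto 0).comp htend
  rw [funext hiter] at this
  have hwt : w t = w 0 := tendsto_nhds_unique tendsto_const_nhds this
  have : w 0 = Z 0 := by rw [hw]; simp [hflow0]
  show ‖w t‖ = ‖Z 0‖
  rw [hwt, this]
end
end

section
/- The set {t • v + m : t ∈ ℝ, m ∈ ℤ²} is dense in ℝ²; equivalently, the projection to the torus T² = ℝ²/ℤ² of the eigenline ℝ • v of A is dense in T². -/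
noncomputable section

/-- The additive subgroup `ℤ + ℤ s` of `ℝ`. -/
def lineG (s : ℝ) : AddSubgroup ℝ where
  carrier := {x : ℝ | ∃ a b : ℤ, x = a + b * s}
  zero_mem' := ⟨0, 0, by push_cast; ring⟩
  add_mem' := by
    rintro x y ⟨a, b, rfl⟩ ⟨a', b', rfl⟩
    exact ⟨a + a', b + b', by push_cast; ring⟩
  neg_mem' := by
    rintro x ⟨a, b, rfl⟩
    exact ⟨-a, -b, by push_cast; ring⟩

open AddSubgroup in
theorem denseZZ (s : ℝ) (hs : Irrational s) :
    Dense {x : ℝ | ∃ a b : ℤ, x = a + b * s} := by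
  rcases (lineG s).dense_or_cyclic with h | ⟨a, ha⟩
  · exact h
  · exfalso
    have h1 : (1 : ℝ) ∈ lineG s := ⟨1, 0, by push_cast; ring⟩
    have hsG : s ∈ lineG s := ⟨0, 1, by push_cast; ring⟩
    rw [ha, mem_closure_singleton] at h1 hsG
    obtain ⟨n, hn⟩ := h1
    obtain ⟨m, hm⟩ := hsG
    rw [zsmul_eq_mul] at hn hm
    have hnz : n ≠ 0 := by
      rintro rfl
      rw [Int.cast_zero, zero_mul] at hn; exact one_ne_zero hn.symm
    have hn0 : (n : ℝ) ≠ 0 := Int.cast_ne_zero.mpr hnz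
    have hnq : (n : ℚ) ≠ 0 := Int.cast_ne_zero.mpr hnz
    refine hs ⟨(m : ℚ) / n, ?_⟩
    have ha' : a = 1 / n := by field_simp; linarith [hn]
    rw [← hm, ha']
    push_cast
    field_simp

/-- A real root `λ` with `|λ| > 1` of `X² - tX + D`, `D = ±1`, is irrational. -/
theorem irr_lam (t D : ℤ) (hD : D = 1 ∨ D = -1) (lam : ℝ) (hlam : 1 < |lam|)
    (heq : lam ^ 2 = t * lam - D) : Irrational lam := by
  rintro ⟨q, rfl⟩
  have hq : q ^ 2 = t * q - D := by exact_mod_cast heq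
  have hd0 : ((q.den : ℤ) : ℚ) ≠ 0 := by
    simp [q.den_nz]
  have e1 : (q.num : ℚ) = q * (q.den : ℤ) := by
    push_cast
    rw [Rat.mul_den_eq_num]
  have key : (q.num : ℚ) ^ 2 = t * q.num * (q.den : ℤ) - D * ((q.den : ℤ)) ^ 2 := by
    calc (q.num : ℚ) ^ 2 = (q * (q.den : ℤ))^2 := by rw [e1]
      _ = (t*q - D) * ((q.den : ℤ):ℚ)^2 := by rw [mul_pow, hq]
      _ = t*(q * (q.den : ℤ))*(q.den : ℤ) - D * ((q.den : ℤ):ℚ)^2 := by ring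
      _ = _ := by rw [← e1]
  have keyZ : q.num ^ 2 = t * q.num * (q.den : ℤ) - D * (q.den : ℤ) ^ 2 := by exact_mod_cast key
  have hdvd : (q.den : ℤ) ∣ q.num ^ 2 := ⟨t * q.num - D * (q.den : ℤ), by linarith [keyZ]⟩
  have hcop : Nat.Coprime q.den q.num.natAbs := (q.reduced).symm
  have hdvd' : q.den ∣ q.num.natAbs ^ 2 := by
    have := Int.natAbs_dvd_natAbs.mpr hdvd
    simpa [Int.natAbs_pow] using this
  have hden1 : q.den = 1 := Nat.Coprime.eq_one_of_dvd (hcop.pow_right 2) hdvd'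
  rw [hden1] at keyZ
  push_cast at keyZ
  have hndvd : q.num ∣ D := ⟨t - q.num, by ring_nf; ring_nf at keyZ; omega⟩
  have hone : q.num = 1 ∨ q.num = -1 := by
    rcases hD with rfl | rfl
    · exact Int.isUnit_iff.mp (isUnit_of_dvd_one hndvd)
    · exact Int.isUnit_iff.mp (isUnit_of_dvd_one (dvd_neg.mp hndvd))
  have hqr : (q : ℝ) = (q.num : ℝ) := by
    conv_lhs => rw [← Rat.num_div_den q, hden1]
    push_cast; ring
  rw [hqr] at hlam
  rcases hone with h | h <;> rw [h] at hlam <;> norm_num at hlam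

/-- the eigenline of the unstable eigenvalue projects densely to the torus. -/
theorem stmt_16 (A : Matrix (Fin 2) (Fin 2) ℤ) (hdet : A.det = 1 ∨ A.det = -1)
    (lam : ℝ) (hlam : 1 < |lam|)
    (v : E2) (hv0 : v ≠ 0) (hv : matAct A v = lam • v) :
    Dense {y : E2 | ∃ (t : ℝ) (m : Fin 2 → ℤ), y = t • v + intVec m} := by
  -- coordinate equations
  have e0 : (A 0 0 : ℝ) * v 0 + (A 0 1 : ℝ) * v 1 = lam * v 0 := by
    have h := congrFun (congrArg (WithLp.equiv 2 (Fin 2 → ℝ)) hv) 0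
    simp [matAct, Matrix.mulVec, dotProduct, Fin.sum_univ_two, Matrix.map_apply] at h
    simpa using h
  have e1 : (A 1 0 : ℝ) * v 0 + (A 1 1 : ℝ) * v 1 = lam * v 1 := by
    have h := congrFun (congrArg (WithLp.equiv 2 (Fin 2 → ℝ)) hv) 1
    simp [matAct, Matrix.mulVec, dotProduct, Fin.sum_univ_two, Matrix.map_apply] at h
    simpa using h
  have hdet' : A 0 0 * A 1 1 - A 0 1 * A 1 0 = A.det := (Matrix.det_fin_two A).symm
  have habs1 : ∀ z w : ℤ, z * w = A.det → (1:ℝ) < |(z:ℝ)| → False := by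
    intro z w hzw hz
    have : z ∣ A.det := ⟨w, hzw.symm⟩
    have hz1 : z = 1 ∨ z = -1 := by
      rcases hdet with h | h
      · rw [h] at this; exact Int.isUnit_iff.mp (isUnit_of_dvd_one this)
      · rw [h] at this; exact Int.isUnit_iff.mp (isUnit_of_dvd_one (dvd_neg.mp this))
    rcases hz1 with rfl | rfl <;> norm_num at hz
  -- v 0 ≠ 0
  have hvne : v 0 ≠ 0 := by
    intro h0
    have h1 : v 1 ≠ 0 := by
      intro h1
      apply hv0
      ext i; fin_cases i <;> simpa [h0, h1]
    rw [h0] at e0 e1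
    have hb : (A 0 1 : ℝ) = 0 := by
      have : (A 0 1 : ℝ) * v 1 = 0 := by linarith
      exact (mul_eq_zero.mp this).resolve_right h1
    have hbZ : A 0 1 = 0 := by exact_mod_cast hb
    have hld : lam = (A 1 1 : ℝ) := by
      have : (A 1 1 : ℝ) * v 1 = lam * v 1 := by linarith
      exact (mul_right_cancel₀ h1 this).symm
    have : A 1 1 * A 0 0 = A.det := by rw [← hdet', hbZ]; ring
    exact habs1 _ _ this (by rw [← hld]; exact hlam)
  -- v 1 ≠ 0
  have hv1ne : v 1 ≠ 0 := by
    intro h1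
    rw [h1] at e0 e1
    have hla : lam = (A 0 0 : ℝ) := by
      have : (A 0 0 : ℝ) * v 0 = lam * v 0 := by linarith
      exact (mul_right_cancel₀ hvne this).symm
    have hc : (A 1 0 : ℝ) = 0 := by
      have : (A 1 0 : ℝ) * v 0 = 0 := by linarith
      exact (mul_eq_zero.mp this).resolve_right hvne
    have hcZ : A 1 0 = 0 := by exact_mod_cast hc
    have : A 0 0 * A 1 1 = A.det := by rw [← hdet', hcZ]; ring
    exact habs1 _ _ this (by rw [← hla]; exact hlam)
  -- b ≠ 0
  have hbne : A 0 1 ≠ 0 := by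
    intro hb
    have hb' : (A 0 1 : ℝ) = 0 := by exact_mod_cast hb
    rw [hb'] at e0
    have hla : lam = (A 0 0 : ℝ) := by
      have : (A 0 0 : ℝ) * v 0 = lam * v 0 := by linarith
      exact (mul_right_cancel₀ hvne this).symm
    have : A 0 0 * A 1 1 = A.det := by rw [← hdet', hb]; ring
    exact habs1 _ _ this (by rw [← hla]; exact hlam)
  -- quadratic equation for lam
  have hquad : lam ^ 2 = (A 0 0 + A 1 1 : ℤ) * lam - A.det := by
    have h1 : ((A 0 0 : ℝ) - lam) * v 0 = -(A 0 1 : ℝ) * v 1 := by linarith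
    have h2 : (A 1 0 : ℝ) * v 0 = (lam - (A 1 1 : ℝ)) * v 1 := by linarith
    have h3 : ((A 0 0 : ℝ) - lam) * (lam - (A 1 1 : ℝ)) * (v 0 * v 1)
        = -(A 0 1 : ℝ) * (A 1 0 : ℝ) * (v 0 * v 1) := by
      calc ((A 0 0 : ℝ) - lam) * (lam - (A 1 1 : ℝ)) * (v 0 * v 1)
          = (((A 0 0 : ℝ) - lam) * v 0) * ((lam - (A 1 1 : ℝ)) * v 1) := by ring
        _ = (-(A 0 1 : ℝ) * v 1) * ((A 1 0 : ℝ) * v 0) := by rw [h1, ← h2]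
        _ = _ := by ring
    have hvv : v 0 * v 1 ≠ 0 := mul_ne_zero hvne hv1ne
    have h4 : ((A 0 0 : ℝ) - lam) * (lam - (A 1 1 : ℝ)) = -(A 0 1 : ℝ) * (A 1 0 : ℝ) :=
      mul_right_cancel₀ hvv h3
    have hdetR : (A.det : ℝ) = (A 0 0 : ℝ) * (A 1 1 : ℝ) - (A 0 1 : ℝ) * (A 1 0 : ℝ) := by
      rw [← hdet']; push_cast; ring
    rw [hdetR]
    push_cast
    nlinarith [h4]
  have hlamirr : Irrational lam := irr_lam _ _ hdet lam hlam hquad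
  -- slope s = v1 / v0 is irrational
  set s : ℝ := v 1 / v 0 with hs_def
  have hlam_s : lam = (A 0 0 : ℝ) + (A 0 1 : ℝ) * s := by
    rw [hs_def]
    field_simp
    linarith [e0]
  have hsirr : Irrational s := by
    rintro ⟨q, hq⟩
    exact hlamirr ⟨(A 0 0 : ℚ) + (A 0 1 : ℚ) * q, by rw [hlam_s, ← hq]; push_cast; ring⟩
  have hdense := denseZZ s hsirr
  -- density
  rw [Metric.dense_iff]
  intro y ε hε
  obtain ⟨z, hzball, a', b', hz⟩ :=
    Metric.dense_iff.mp hdense (y 1 - s * y 0) ε hε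
  refine ⟨((y 0 + b') / v 0) • v + intVec ![-b', a'], ?_, ((y 0 + b') / v 0), ![-b', a'], rfl⟩
  rw [Metric.mem_ball]
  set t : ℝ := (y 0 + b') / v 0 with ht
  have hc0 : (t • v + intVec ![-b', a']) 0 = y 0 := by
    simp only [PiLp.add_apply, PiLp.smul_apply, smul_eq_mul, intVec]
    show t * v 0 + ((-b' : ℤ) : ℝ) = y 0
    rw [ht]
    field_simp
    simp
  have hc1 : (t • v + intVec ![-b', a']) 1 = s * y 0 + z := by
    simp only [PiLp.add_apply, PiLp.smul_apply, smul_eq_mul, intVec]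
    show t * v 1 + ((a' : ℤ) : ℝ) = s * y 0 + z
    rw [ht, hz, hs_def]
    field_simp
    ring
  have hdist : dist (t • v + intVec ![-b', a']) y = |s * y 0 + z - y 1| := by
    rw [EuclideanSpace.dist_eq]
    simp only [Fin.sum_univ_two, hc0, hc1, Real.dist_eq, sub_self, abs_zero]
    rw [show (0:ℝ) ^ 2 + |s * y 0 + z - y 1| ^ 2 = (s * y 0 + z - y 1) ^ 2 by
        rw [sq_abs]; ring,
      Real.sqrt_sq_eq_abs]
  rw [hdist]
  have := Metric.mem_ball.mp hzball
  rw [Real.dist_eq] at this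
  calc |s * y 0 + z - y 1| = |z - (y 1 - s * y 0)| := by ring_nf
    _ < ε := this
end
end
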